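/- Let u, v, w be unit vectors in F³ (F = ℝ or ℂ) such that u and v are not parallel. Then there exists a finite composition of linear isometric automorphisms of F³, each of which fixes either u or v, whose composite maps u to w. -/

import Mathlib

open scoped InnerProductSpace

variable {𝕜 : Type} [RCLike 𝕜]

local notation "E" => EuclideanSpace 𝕜 (Fin 3)

lemma extend_pair (p e : E) (hp : ‖p‖ = 1) (he : ‖e‖ = 1) (hpe : ⟪p, e⟫_𝕜 = 0) :
    ∃ b : OrthonormalBasis (Fin 3) 𝕜 E, b 0 = p ∧ b 1 = e := by
  have hcard : Module.finrank 𝕜 (EuclideanSpace 𝕜 (Fin 3)) = Fintype.card (Fin 3) := by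
    simp [finrank_euclideanSpace]
  set f : Fin 3 → E := ![p, e, 0] with hf
  have horth : Orthonormal 𝕜 (Set.restrict {0, 1} f) := by
    rw [orthonormal_iff_ite]
    rintro ⟨i, hi⟩ ⟨j, hj⟩
    simp only [Set.mem_insert_iff, Set.mem_singleton_iff] at hi hj
    have hpp : ⟪p, p⟫_𝕜 = 1 := by
      rw [@inner_self_eq_norm_sq_to_K]; rw [hp]; norm_num
    have hee : ⟪e, e⟫_𝕜 = 1 := by
      rw [@inner_self_eq_norm_sq_to_K]; rw [he]; norm_num
    have hep : ⟪e, p⟫_𝕜 = 0 := by rw [← inner_conj_symm, hpe, map_zero]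
    rcases hi with rfl | rfl <;> rcases hj with rfl | rfl <;>
      simp [f, hpp, hee, hpe, hep, Set.restrict, hp, he]
  obtain ⟨b, hb⟩ := horth.exists_orthonormalBasis_extension_of_card_eq hcard
  refine ⟨b, ?_, ?_⟩
  · have := hb 0 (by simp); simpa [f] using this
  · have := hb 1 (by simp); simpa [f] using this

lemma lemA (p x y : E) (hp : ‖p‖ = 1) (hx : ‖x‖ = 1) (hy : ‖y‖ = 1)
    (hxy : ⟪p, x⟫_𝕜 = ⟪p, y⟫_𝕜) :
    ∃ g : E ≃ₗᵢ[𝕜] E, g p = p ∧ g x = y := by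
  set c : 𝕜 := ⟪p, x⟫_𝕜 with hc
  have hpp : ⟪p, p⟫_𝕜 = 1 := by
    rw [@inner_self_eq_norm_sq_to_K]; rw [hp]; norm_num
  set x' : E := x - c • p with hx'
  set y' : E := y - c • p with hy'
  have hpx' : ⟪p, x'⟫_𝕜 = 0 := by
    simp [hx', inner_sub_right, inner_smul_right, hpp, hc, hp]
  have hpy' : ⟪p, y'⟫_𝕜 = 0 := by
    simp [hy', inner_sub_right, inner_smul_right, hpp, ← hxy, hc, hp]
  have normsq : ∀ z z' : E, ‖z‖ = 1 → z' = z - c • p → ⟪p, z'⟫_𝕜 = 0 →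
      ‖z'‖ ^ 2 = 1 - ‖c‖ ^ 2 := by
    intro z z' hz hzd hpz'
    have hz'' : z = z' + c • p := by rw [hzd]; abel
    have hortho : ⟪z', c • p⟫_𝕜 = 0 := by
      rw [inner_smul_right, ← inner_conj_symm, hpz']; simp
    have := norm_add_sq (𝕜 := 𝕜) z' (c • p)
    rw [← hz'', hortho] at this
    simp [hz, norm_smul, hp] at this
    linarith
  have hxs := normsq x x' hx hx' hpx'
  have hys := normsq y y' hy hy' hpy'
  have hnorm_eq : ‖x'‖ = ‖y'‖ := by
    have := hxs.trans hys.symm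
    nlinarith [norm_nonneg x', norm_nonneg y']
  by_cases h0 : x' = 0
  · have hy0 : y' = 0 := by
      have : ‖y'‖ = 0 := by rw [← hnorm_eq, h0, norm_zero]
      exact norm_eq_zero.mp this
    have hxe : x = y := by
      have hx2 : x = c • p := by rw [← sub_eq_zero]; exact h0
      have hy2 : y = c • p := by rw [← sub_eq_zero]; exact hy0
      rw [hx2, hy2]
    exact ⟨LinearIsometryEquiv.refl 𝕜 E, rfl, by simp [hxe]⟩
  · have hny : y' ≠ 0 := by
      intro h; apply h0
      have : ‖x'‖ = 0 := by rw [hnorm_eq, h, norm_zero]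
      exact norm_eq_zero.mp this
    set ex : E := (↑‖x'‖⁻¹ : 𝕜) • x' with hex
    set ey : E := (↑‖y'‖⁻¹ : 𝕜) • y' with hey
    have hnex : ‖ex‖ = 1 := by
      rw [hex, norm_smul]
      simp [norm_ne_zero_iff.mpr h0, inv_mul_cancel₀]
    have hney : ‖ey‖ = 1 := by
      rw [hey, norm_smul]
      simp [norm_ne_zero_iff.mpr hny, inv_mul_cancel₀]
    have hpex : ⟪p, ex⟫_𝕜 = 0 := by rw [hex, inner_smul_right, hpx', mul_zero]
    have hpey : ⟪p, ey⟫_𝕜 = 0 := by rw [hey, inner_smul_right, hpy', mul_zero]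
    obtain ⟨b₁, hb₁0, hb₁1⟩ := extend_pair p ex hp hnex hpex
    obtain ⟨b₂, hb₂0, hb₂1⟩ := extend_pair p ey hp hney hpey
    refine ⟨b₁.repr.trans b₂.repr.symm, ?_, ?_⟩
    · have : b₁.repr (b₁ 0) = EuclideanSpace.single 0 1 := b₁.repr_self 0
      simp only [LinearIsometryEquiv.trans_apply, ← hb₁0, this,
        b₂.repr_symm_single, hb₂0]
    · have hxdec : x = c • p + (↑‖x'‖ : 𝕜) • ex := by
        rw [hex, smul_smul]
        have : (↑‖x'‖ : 𝕜) * (↑‖x'‖⁻¹ : 𝕜) = 1 := by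
          rw [← RCLike.ofReal_mul, mul_inv_cancel₀ (norm_ne_zero_iff.mpr h0)]
          simp
        rw [this, one_smul, hx']; abel
      have hydec : y = c • p + (↑‖x'‖ : 𝕜) • ey := by
        rw [hey, smul_smul, hnorm_eq]
        have : (↑‖y'‖ : 𝕜) * (↑‖y'‖⁻¹ : 𝕜) = 1 := by
          rw [← RCLike.ofReal_mul, mul_inv_cancel₀ (norm_ne_zero_iff.mpr hny)]
          simp
        rw [this, one_smul, hy']; abel
      have gb : ∀ i, (b₁.repr.trans b₂.repr.symm) (b₁ i) = b₂ i := by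
        intro i
        simp only [LinearIsometryEquiv.trans_apply, b₁.repr_self,
          b₂.repr_symm_single]
      rw [hxdec, hydec]
      simp only [map_add, LinearIsometryEquiv.map_smul, ← hb₁0, ← hb₁1, gb,
        hb₂0, hb₂1]

lemma lemB (p q : E) (hp : ‖p‖ = 1) (hq : ‖q‖ = 1)
    (ha : ‖⟪q, p⟫_𝕜‖ < 1) (c s : 𝕜)
    (h : ‖s - c * ⟪q, p⟫_𝕜‖ ^ 2 ≤ (1 - ‖⟪q, p⟫_𝕜‖ ^ 2) * (1 - ‖c‖ ^ 2)) :
    ∃ y : E, ‖y‖ = 1 ∧ ⟪p, y⟫_𝕜 = c ∧ ⟪q, y⟫_𝕜 = s := by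
  have key : ∃ (β : ℝ) (e₂ e₃ : E), 0 < β ∧ β ^ 2 = 1 - ‖⟪q, p⟫_𝕜‖ ^ 2 ∧
      ‖e₂‖ = 1 ∧ ‖e₃‖ = 1 ∧ ⟪p, e₂⟫_𝕜 = 0 ∧ ⟪p, e₃⟫_𝕜 = 0 ∧
      ⟪q, e₂⟫_𝕜 = ((β : ℝ) : 𝕜) ∧ ⟪q, e₃⟫_𝕜 = 0 ∧ ⟪e₂, e₃⟫_𝕜 = 0 ∧
      ⟪p, p⟫_𝕜 = 1 := by
    set a : 𝕜 := ⟪q, p⟫_𝕜 with hadef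
    set α : ℝ := ‖a‖ with hα
    have hpp : ⟪p, p⟫_𝕜 = 1 := by
      rw [@inner_self_eq_norm_sq_to_K]; rw [hp]; norm_num
    have hqq : ⟪q, q⟫_𝕜 = 1 := by
      rw [@inner_self_eq_norm_sq_to_K]; rw [hq]; norm_num
    have hpq : ⟪p, q⟫_𝕜 = starRingEnd 𝕜 a := by rw [← inner_conj_symm]
    set q' : E := q - (starRingEnd 𝕜 a) • p with hq'
    have hpq' : ⟪p, q'⟫_𝕜 = 0 := by
      simp [hq', inner_sub_right, inner_smul_right, hpp, hpq, hp]
    have hq'q : ⟪q, q'⟫_𝕜 = ((1 - α^2 : ℝ) : 𝕜) := by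
      simp only [hq', inner_sub_right, inner_smul_right, hqq]
      rw [← hadef, RCLike.conj_mul]
      push_cast [hα]
      ring
    have hβpos2 : (0:ℝ) < 1 - α ^ 2 := by nlinarith [norm_nonneg a]
    have hq'norm : ‖q'‖ ^ 2 = 1 - α ^ 2 := by
      have hortho : ⟪q', (starRingEnd 𝕜 a) • p⟫_𝕜 = 0 := by
        rw [inner_smul_right, ← inner_conj_symm, hpq']; simp
      have hdec : q = q' + (starRingEnd 𝕜 a) • p := by rw [hq']; abel
      have := norm_add_sq (𝕜 := 𝕜) q' ((starRingEnd 𝕜 a) • p)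
      rw [← hdec, hortho] at this
      simp [hq, norm_smul, hp, hα] at this
      linarith
    set β : ℝ := ‖q'‖ with hβ
    have hβpos : 0 < β := by nlinarith [norm_nonneg q']
    have hβne : ((β : ℝ) : 𝕜) ≠ 0 := by simpa using hβpos.ne'
    set e₂ : E := ((β⁻¹ : ℝ) : 𝕜) • q' with he₂
    have hne₂ : ‖e₂‖ = 1 := by
      rw [he₂, norm_smul]
      simp [inv_mul_cancel₀ hβpos.ne', abs_of_pos hβpos]
      exact inv_mul_cancel₀ hβpos.ne'
    have hpe₂ : ⟪p, e₂⟫_𝕜 = 0 := by rw [he₂, inner_smul_right, hpq', mul_zero]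
    have hqe₂ : ⟪q, e₂⟫_𝕜 = ((β : ℝ) : 𝕜) := by
      rw [he₂, inner_smul_right, hq'q,
        show (1 - α^2 : ℝ) = β * β by rw [← hq'norm]; ring]
      push_cast
      rw [← mul_assoc, inv_mul_cancel₀ hβne, one_mul]
    have hq'e₂ : q' = ((β : ℝ) : 𝕜) • e₂ := by
      rw [he₂, smul_smul, ← RCLike.ofReal_mul, mul_inv_cancel₀ hβpos.ne']
      simp
    obtain ⟨b, hb0, hb1⟩ := extend_pair p e₂ hp hne₂ hpe₂
    have horth := orthonormal_iff_ite.mp b.orthonormal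
    have hpe₃ : ⟪p, b 2⟫_𝕜 = 0 := by
      have := horth 0 2; rw [hb0] at this; simpa using this
    have he₂e₃ : ⟪e₂, b 2⟫_𝕜 = 0 := by
      have := horth 1 2; rw [hb1] at this; simpa using this
    have hne₃ : ‖b 2‖ = 1 := b.orthonormal.1 2
    have hqe₃ : ⟪q, b 2⟫_𝕜 = 0 := by
      have hdec : q = (starRingEnd 𝕜 a) • p + ((β : ℝ) : 𝕜) • e₂ := by
        rw [← hq'e₂, hq']; abel
      rw [hdec, inner_add_left, inner_smul_left, inner_smul_left, hpe₃, he₂e₃]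
      simp
    exact ⟨β, e₂, b 2, hβpos, hq'norm, hne₂, hne₃, hpe₂, hpe₃, hqe₂, hqe₃,
      he₂e₃, hpp⟩
  obtain ⟨β, e₂, e₃, hβpos, hβsq, hne₂, hne₃, hpe₂, hpe₃, hqe₂, hqe₃, he₂e₃,
    hpp⟩ := key
  have hβne : ((β : ℝ) : 𝕜) ≠ 0 := by simpa using hβpos.ne'
  have hβpos2 : (0:ℝ) < 1 - ‖⟪q, p⟫_𝕜‖ ^ 2 := by rw [← hβsq]; positivity
  have he₃e₂ : ⟪e₃, e₂⟫_𝕜 = 0 := by rw [← inner_conj_symm, he₂e₃, map_zero]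
  set d : 𝕜 := (s - c * ⟪q, p⟫_𝕜) * ((β⁻¹ : ℝ) : 𝕜) with hd
  have hdβ : d * ((β : ℝ) : 𝕜) = s - c * ⟪q, p⟫_𝕜 := by
    rw [hd, mul_assoc]
    push_cast
    rw [inv_mul_cancel₀ hβne, mul_one]
  have hd2 : ‖d‖ ^ 2 ≤ 1 - ‖c‖ ^ 2 := by
    have hnorminv : ‖((β⁻¹:ℝ):𝕜)‖ = β⁻¹ := by
      rw [RCLike.norm_ofReal]; exact abs_of_pos (inv_pos.mpr hβpos)
    have hnd : ‖d‖ ^ 2 * (1 - ‖⟪q, p⟫_𝕜‖^2) = ‖s - c * ⟪q, p⟫_𝕜‖ ^ 2 := by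
      rw [hd, norm_mul, mul_pow, hnorminv, ← hβsq, mul_assoc, inv_pow,
        inv_mul_cancel₀ (pow_ne_zero 2 hβpos.ne'), mul_one]
    have h4 : ‖d‖^2 * (1 - ‖⟪q, p⟫_𝕜‖^2) ≤ (1-‖c‖^2) * (1 - ‖⟪q, p⟫_𝕜‖^2) :=
      calc ‖d‖^2 * (1 - ‖⟪q, p⟫_𝕜‖^2) = ‖s - c * ⟪q, p⟫_𝕜‖^2 := hnd
        _ ≤ (1 - ‖⟪q, p⟫_𝕜‖^2) * (1-‖c‖^2) := h
        _ = (1-‖c‖^2) * (1 - ‖⟪q, p⟫_𝕜‖^2) := mul_comm _ _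
    exact le_of_mul_le_mul_right h4 hβpos2
  set r : ℝ := Real.sqrt (1 - ‖c‖^2 - ‖d‖^2) with hr
  have hrsq : r ^ 2 = 1 - ‖c‖^2 - ‖d‖^2 := Real.sq_sqrt (by linarith)
  refine ⟨c • p + d • e₂ + ((r : ℝ) : 𝕜) • e₃, ?_, ?_, ?_⟩
  · have ho1 : ⟪c • p + d • e₂, ((r:ℝ):𝕜) • e₃⟫_𝕜 = 0 := by
      rw [inner_add_left, inner_smul_left, inner_smul_left, inner_smul_right,
        inner_smul_right, hpe₃, he₂e₃]
      ring
    have ho2 : ⟪c • p, d • e₂⟫_𝕜 = 0 := by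
      rw [inner_smul_left, inner_smul_right, hpe₂]; ring
    have h1 := norm_add_sq (𝕜 := 𝕜) (c • p + d • e₂) (((r:ℝ):𝕜) • e₃)
    rw [ho1] at h1
    have h2 := norm_add_sq (𝕜 := 𝕜) (c • p) (d • e₂)
    rw [ho2] at h2
    have hsq : ‖c • p + d • e₂ + ((r : ℝ) : 𝕜) • e₃‖ ^ 2 = 1 := by
      rw [h1, h2]
      simp only [norm_smul, hp, hne₂, hne₃, map_zero, mul_one, RCLike.norm_ofReal,
        mul_zero, zero_mul, add_zero]
      rw [sq_abs]
      linarith [hrsq]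
    calc ‖c • p + d • e₂ + ((r : ℝ) : 𝕜) • e₃‖
        = Real.sqrt (‖c • p + d • e₂ + ((r : ℝ) : 𝕜) • e₃‖^2) :=
          (Real.sqrt_sq (norm_nonneg _)).symm
      _ = 1 := by rw [hsq]; simp
  · rw [inner_add_right, inner_add_right, inner_smul_right, inner_smul_right,
      inner_smul_right, hpp, hpe₂, hpe₃]
    ring
  · rw [inner_add_right, inner_add_right, inner_smul_right, inner_smul_right,
      inner_smul_right, hqe₂, hqe₃, hdβ]
    ring

def Reach (u v x : EuclideanSpace 𝕜 (Fin 3)) : Prop :=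
  ∃ L : List (EuclideanSpace 𝕜 (Fin 3) ≃ₗᵢ[𝕜] EuclideanSpace 𝕜 (Fin 3)),
    (∀ f ∈ L, f u = u ∨ f v = v) ∧ L.foldr (fun f x => f x) u = x

lemma reach_self (u v : E) : Reach u v u := ⟨[], by simp, rfl⟩

lemma reach_norm {u v x : E} (hu : ‖u‖ = 1) (h : Reach u v x) : ‖x‖ = 1 := by
  obtain ⟨L, hL, hfold⟩ := h
  rw [← hfold]
  clear hfold hL
  induction L with
  | nil => exact hu
  | cons g L ih => simpa using ih

lemma reach_step {u v x : E} (g : E ≃ₗᵢ[𝕜] E) (h : Reach u v x)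
    (hg : g u = u ∨ g v = v) : Reach u v (g x) := by
  obtain ⟨L, hL, hfold⟩ := h
  refine ⟨g :: L, ?_, by simp [hfold]⟩
  intro f hf
  rcases List.mem_cons.mp hf with rfl | hf
  · exact hg
  · exact hL f hf

lemma reach_of_inner_eq {u v x : E} (hu : ‖u‖ = 1) (hv : ‖v‖ = 1)
    (hx : Reach u v x) (y : E) (hy : ‖y‖ = 1)
    (h : ⟪u, y⟫_𝕜 = ⟪u, x⟫_𝕜 ∨ ⟪v, y⟫_𝕜 = ⟪v, x⟫_𝕜) : Reach u v y := by
  have hxn : ‖x‖ = 1 := reach_norm hu hx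
  rcases h with h | h
  · obtain ⟨g, hgu, hgx⟩ := lemA u x y hu hxn hy h.symm
    have := reach_step g hx (Or.inl hgu)
    rwa [hgx] at this
  · obtain ⟨g, hgv, hgx⟩ := lemA v x y hv hxn hy h.symm
    have := reach_step g hx (Or.inr hgv)
    rwa [hgx] at this

/-- One step: from a reachable `x`, prescribe the inner product with `q` while keeping
the inner product with `p`, where `{p,q} = {u,v}`. -/
lemma one_step {u v : E} (hu : ‖u‖ = 1) (hv : ‖v‖ = 1) (p q : E)
    (hpq : (p = u ∧ q = v) ∨ (p = v ∧ q = u))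
    (ha : ‖⟪q, p⟫_𝕜‖ < 1) {x : E} (hx : Reach u v x) (s : 𝕜)
    (hs : ‖s - ⟪p, x⟫_𝕜 * ⟪q, p⟫_𝕜‖ ^ 2 ≤
      (1 - ‖⟪q, p⟫_𝕜‖ ^ 2) * (1 - ‖⟪p, x⟫_𝕜‖ ^ 2)) :
    ∃ y : E, Reach u v y ∧ ⟪p, y⟫_𝕜 = ⟪p, x⟫_𝕜 ∧ ⟪q, y⟫_𝕜 = s := by
  have hp : ‖p‖ = 1 := by rcases hpq with ⟨rfl, rfl⟩ | ⟨rfl, rfl⟩ <;> assumption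
  have hq : ‖q‖ = 1 := by rcases hpq with ⟨rfl, rfl⟩ | ⟨rfl, rfl⟩ <;> assumption
  obtain ⟨y, hny, hpy, hqy⟩ := lemB p q hp hq ha (⟪p, x⟫_𝕜) s hs
  refine ⟨y, ?_, hpy, hqy⟩
  rcases hpq with ⟨rfl, rfl⟩ | ⟨rfl, rfl⟩
  · exact reach_of_inner_eq hu hv hx y hny (Or.inl hpy)
  · exact reach_of_inner_eq hu hv hx y hny (Or.inr hpy)

lemma shrink {u v : E} (hu : ‖u‖ = 1) (hv : ‖v‖ = 1) (p q : E)
    (hpq : (p = u ∧ q = v) ∨ (p = v ∧ q = u))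
    (ha : ‖⟪q, p⟫_𝕜‖ < 1) {x : E} (hx : Reach u v x)
    (hm : ‖⟪p, x⟫_𝕜‖ ≤ 1) :
    ∃ y : E, Reach u v y ∧ ‖⟪q, y⟫_𝕜‖ ≤ ‖⟪q, p⟫_𝕜‖ * ‖⟪p, x⟫_𝕜‖ := by
  set α : ℝ := ‖⟪q, p⟫_𝕜‖ with hα
  set m : ℝ := ‖⟪p, x⟫_𝕜‖ with hmdef
  have hα0 : 0 ≤ α := norm_nonneg _
  have hm0 : 0 ≤ m := norm_nonneg _
  have hα2 : 0 ≤ 1 - α ^ 2 := by nlinarith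
  have hm2 : 0 ≤ 1 - m ^ 2 := by nlinarith
  set R : ℝ := Real.sqrt ((1 - α ^ 2) * (1 - m ^ 2)) with hR
  have hR0 : 0 ≤ R := Real.sqrt_nonneg _
  have hRsq : R ^ 2 = (1 - α ^ 2) * (1 - m ^ 2) := Real.sq_sqrt (by positivity)
  set θ : ℝ := max 0 (1 - R / (α * m)) with hθ
  have hθ0 : 0 ≤ θ := le_max_left _ _
  have hθ1 : θ ≤ 1 := by
    rw [hθ]
    apply max_le (by norm_num)
    have : 0 ≤ R / (α * m) := by positivity
    linarith
  have hkey : (1 - θ) * (α * m) ≤ R := by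
    rcases eq_or_lt_of_le (by positivity : (0:ℝ) ≤ α * m) with heq | hlt
    · rw [← heq]; simpa using hR0
    · by_cases hc : R / (α * m) ≥ 1
      · have hθ' : θ = 0 := by
          rw [hθ, max_eq_left (by linarith)]
        rw [hθ']
        nlinarith [(le_div_iff₀ hlt).mp hc]
      · push_neg at hc
        have hθ' : θ = 1 - R / (α * m) := by
          rw [hθ, max_eq_right (by nlinarith [div_nonneg hR0 (le_of_lt hlt)])]
        rw [hθ']
        rw [show (1 - (1 - R / (α * m))) = R / (α * m) by ring]
        rw [div_mul_cancel₀ _ hlt.ne']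
  set s : 𝕜 := ((θ : ℝ) : 𝕜) * (⟪p, x⟫_𝕜 * ⟪q, p⟫_𝕜) with hs
  have hsnorm : ‖s‖ = θ * (m * α) := by
    rw [hs, norm_mul, norm_mul, RCLike.norm_ofReal, abs_of_nonneg hθ0, ← hα, ← hmdef]
  have hdiff : ‖s - ⟪p, x⟫_𝕜 * ⟪q, p⟫_𝕜‖ = (1 - θ) * (m * α) := by
    have : s - ⟪p, x⟫_𝕜 * ⟪q, p⟫_𝕜 = (((θ - 1 : ℝ)) : 𝕜) * (⟪p, x⟫_𝕜 * ⟪q, p⟫_𝕜) := by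
      rw [hs]; push_cast; ring
    rw [this, norm_mul, norm_mul, RCLike.norm_ofReal, abs_of_nonpos (by linarith),
      ← hα, ← hmdef]
    ring
  have hcond : ‖s - ⟪p, x⟫_𝕜 * ⟪q, p⟫_𝕜‖ ^ 2 ≤ (1 - α ^ 2) * (1 - m ^ 2) := by
    rw [hdiff, ← hRsq]
    have h1 : (1 - θ) * (m * α) ≤ R := by rw [mul_comm m α]; exact hkey
    nlinarith [mul_nonneg (mul_nonneg (sub_nonneg.mpr hθ1) hm0) hα0]
  obtain ⟨y, hry, hpy, hqy⟩ := one_step hu hv p q hpq ha hx s hcond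
  refine ⟨y, hry, ?_⟩
  rw [hqy, hsnorm]
  nlinarith [mul_nonneg (mul_nonneg (sub_nonneg.mpr hθ1) hm0) hα0]

lemma norm_inner_self_one {u : E} (hu : ‖u‖ = 1) : ⟪u, u⟫_𝕜 = 1 := by
  rw [@inner_self_eq_norm_sq_to_K]; rw [hu]; norm_num

lemma descent {u v : E} (hu : ‖u‖ = 1) (hv : ‖v‖ = 1)
    (ha : ‖⟪v, u⟫_𝕜‖ < 1) (n : ℕ) :
    ∃ x : E, Reach u v x ∧ ‖⟪u, x⟫_𝕜‖ ≤ ‖⟪v, u⟫_𝕜‖ ^ n := by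
  set α : ℝ := ‖⟪v, u⟫_𝕜‖ with hα
  have hα0 : 0 ≤ α := norm_nonneg _
  induction n with
  | zero =>
    refine ⟨u, reach_self u v, ?_⟩
    rw [norm_inner_self_one hu, pow_zero, norm_one]
  | succ n ih =>
    obtain ⟨x, hx, hb⟩ := ih
    have hαn1 : α ^ n ≤ 1 := pow_le_one₀ hα0 ha.le
    have hm1 : ‖⟪u, x⟫_𝕜‖ ≤ 1 := le_trans hb hαn1
    obtain ⟨y, hy, hby⟩ := shrink hu hv u v (Or.inl ⟨rfl, rfl⟩) ha hx hm1
    have ha' : ‖⟪u, v⟫_𝕜‖ < 1 := by rw [norm_inner_symm]; exact ha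
    have hm2 : ‖⟪v, y⟫_𝕜‖ ≤ 1 := by
      calc ‖⟪v, y⟫_𝕜‖ ≤ α * ‖⟪u, x⟫_𝕜‖ := hby
        _ ≤ 1 * 1 := by
            apply mul_le_mul ha.le hm1 (norm_nonneg _) (by norm_num)
        _ = 1 := by norm_num
    obtain ⟨z, hz, hbz⟩ := shrink hu hv v u (Or.inr ⟨rfl, rfl⟩) ha' hy hm2
    refine ⟨z, hz, ?_⟩
    have h1 : ‖⟪u, v⟫_𝕜‖ = α := by rw [hα, norm_inner_symm]
    calc ‖⟪u, z⟫_𝕜‖ ≤ ‖⟪u, v⟫_𝕜‖ * ‖⟪v, y⟫_𝕜‖ := hbz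
      _ = α * ‖⟪v, y⟫_𝕜‖ := by rw [h1]
      _ ≤ α * (α * ‖⟪u, x⟫_𝕜‖) := by
          apply mul_le_mul_of_nonneg_left hby hα0
      _ ≤ α * (α * α ^ n) := by
          apply mul_le_mul_of_nonneg_left
            (mul_le_mul_of_nonneg_left hb hα0) hα0
      _ = α ^ (n + 2) := by ring
      _ ≤ α ^ (n + 1) := pow_le_pow_of_le_one hα0 ha.le (by omega)

lemma reach_zero {u v : E} (hu : ‖u‖ = 1) (hv : ‖v‖ = 1)
    (ha : ‖⟪v, u⟫_𝕜‖ < 1) :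
    ∃ x : E, Reach u v x ∧ ⟪u, x⟫_𝕜 = 0 ∧ ⟪v, x⟫_𝕜 = 0 := by
  set α : ℝ := ‖⟪v, u⟫_𝕜‖ with hα
  have hα0 : 0 ≤ α := norm_nonneg _
  have hβsq : (0:ℝ) < 1 - α ^ 2 := by nlinarith
  set β : ℝ := Real.sqrt (1 - α ^ 2) with hβ
  have hβpos : 0 < β := Real.sqrt_pos.mpr hβsq
  have hβsq' : β ^ 2 = 1 - α ^ 2 := Real.sq_sqrt hβsq.le
  have hβ1 : β ≤ 1 := by nlinarith
  obtain ⟨N, hN⟩ := exists_pow_lt_of_lt_one (half_pos hβpos) ha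
  obtain ⟨x, hx, hxb⟩ := descent hu hv ha N
  have hm : ‖⟪u, x⟫_𝕜‖ < β / 2 := lt_of_le_of_lt hxb hN
  have hm0 : 0 ≤ ‖⟪u, x⟫_𝕜‖ := norm_nonneg _
  have hcond : ‖(0:𝕜) - ⟪u, x⟫_𝕜 * ⟪v, u⟫_𝕜‖ ^ 2 ≤
      (1 - ‖⟪v, u⟫_𝕜‖ ^ 2) * (1 - ‖⟪u, x⟫_𝕜‖ ^ 2) := by
    rw [zero_sub, norm_neg, norm_mul]
    have hmlt : ‖⟪u, x⟫_𝕜‖ < 1/2 := by nlinarith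
    nlinarith [norm_nonneg (⟪u, x⟫_𝕜), mul_nonneg hm0 hα0]
  obtain ⟨y, hy, hpy, hqy⟩ := one_step hu hv u v (Or.inl ⟨rfl, rfl⟩) ha hx 0 hcond
  have ha' : ‖⟪u, v⟫_𝕜‖ < 1 := by rw [norm_inner_symm]; exact ha
  have hcond2 : ‖(0:𝕜) - ⟪v, y⟫_𝕜 * ⟪u, v⟫_𝕜‖ ^ 2 ≤
      (1 - ‖⟪u, v⟫_𝕜‖ ^ 2) * (1 - ‖⟪v, y⟫_𝕜‖ ^ 2) := by
    rw [hqy]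
    simp only [zero_mul, zero_sub, neg_zero, norm_zero]
    have : ‖⟪u, v⟫_𝕜‖ ^ 2 ≤ 1 := by nlinarith [norm_nonneg (⟪u, v⟫_𝕜), ha']
    nlinarith
  obtain ⟨z, hz, hpz, hqz⟩ := one_step hu hv v u (Or.inr ⟨rfl, rfl⟩) ha' hy 0 hcond2
  exact ⟨z, hz, hqz, by rw [hpz, hqy]⟩

set_option maxHeartbeats 1000000 in
lemma growth {u v : E} (hu : ‖u‖ = 1) (hv : ‖v‖ = 1)
    (ha : ‖⟪v, u⟫_𝕜‖ < 1) (n : ℕ) :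
    ∀ z : 𝕜, ‖z‖ ≤ 1 → ‖z‖ * ‖⟪v, u⟫_𝕜‖ ^ n ≤ Real.sqrt (1 - ‖⟪v, u⟫_𝕜‖ ^ 2) →
    ∃ x : E, Reach u v x ∧ ⟪u, x⟫_𝕜 = z := by
  set α : ℝ := ‖⟪v, u⟫_𝕜‖ with hα
  have hα0 : 0 ≤ α := norm_nonneg _
  have hβsq : (0:ℝ) < 1 - α ^ 2 := by nlinarith
  set β : ℝ := Real.sqrt (1 - α ^ 2) with hβ
  have hβsq' : β ^ 2 = 1 - α ^ 2 := Real.sq_sqrt hβsq.le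
  have ha' : ‖⟪u, v⟫_𝕜‖ < 1 := by rw [norm_inner_symm]; exact ha
  have hαuv : ‖⟪u, v⟫_𝕜‖ = α := by rw [hα, norm_inner_symm]
  induction n with
  | zero =>
    intro z hz1 hzb
    rw [pow_zero, mul_one] at hzb
    obtain ⟨x, hx, hux, hvx⟩ := reach_zero hu hv ha
    have hcond : ‖z - ⟪v, x⟫_𝕜 * ⟪u, v⟫_𝕜‖ ^ 2 ≤
        (1 - ‖⟪u, v⟫_𝕜‖ ^ 2) * (1 - ‖⟪v, x⟫_𝕜‖ ^ 2) := by
      rw [hvx]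
      simp only [zero_mul, sub_zero, norm_zero]
      rw [hαuv]
      have : ‖z‖ ^ 2 ≤ β ^ 2 := by nlinarith [norm_nonneg z, Real.sqrt_nonneg (1 - α^2)]
      nlinarith
    obtain ⟨y, hy, hpy, hqy⟩ := one_step hu hv v u (Or.inr ⟨rfl, rfl⟩) ha' hx z hcond
    exact ⟨y, hy, hqy⟩
  | succ n ih =>
    intro z hz1 hzb
    have hαn : α ^ (n + 2) ≤ α ^ (n + 1) := pow_le_pow_of_le_one hα0 ha.le (by omega)
    set c : 𝕜 := z * ⟪v, u⟫_𝕜 * ⟪u, v⟫_𝕜 with hc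
    have hconja : ⟪v, u⟫_𝕜 * ⟪u, v⟫_𝕜 = ((α ^ 2 : ℝ) : 𝕜) := by
      rw [← inner_conj_symm u v, RCLike.mul_conj]
      norm_cast
    have hnc : ‖c‖ = ‖z‖ * α ^ 2 := by
      rw [hc, norm_mul, norm_mul, hαuv, ← hα]
      ring
    have hc1 : ‖c‖ ≤ 1 := by
      rw [hnc]
      nlinarith [norm_nonneg z]
    have hcb : ‖c‖ * α ^ n ≤ β := by
      rw [hnc]
      calc ‖z‖ * α ^ 2 * α ^ n = ‖z‖ * α ^ (n + 2) := by ring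
        _ ≤ ‖z‖ * α ^ (n + 1) := mul_le_mul_of_nonneg_left hαn (norm_nonneg z)
        _ ≤ β := hzb
    obtain ⟨x, hx, hux⟩ := ih c hc1 hcb
    -- step 1: prescribe inner with v to be z * ⟪v, u⟫
    have hcond1 : ‖z * ⟪v, u⟫_𝕜 - ⟪u, x⟫_𝕜 * ⟪v, u⟫_𝕜‖ ^ 2 ≤
        (1 - ‖⟪v, u⟫_𝕜‖ ^ 2) * (1 - ‖⟪u, x⟫_𝕜‖ ^ 2) := by
      rw [hux]
      have heq : z * ⟪v, u⟫_𝕜 - c * ⟪v, u⟫_𝕜 = z * ⟪v, u⟫_𝕜 * (1 - ((α^2:ℝ) : 𝕜)) := by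
        rw [hc,
          show z * ⟪v,u⟫_𝕜 * ⟪u,v⟫_𝕜 * ⟪v,u⟫_𝕜 = z * ⟪v,u⟫_𝕜 * (⟪v,u⟫_𝕜 * ⟪u,v⟫_𝕜) from by
            ring, hconja]
        ring
      rw [heq, norm_mul, norm_mul, ← hα]
      have ht2 : ‖z‖^2 ≤ 1 := by nlinarith [norm_nonneg z]
      have ha2 : α^2 ≤ 1 := by nlinarith
      have hprod : ‖z‖^2 * α^2 ≤ 1 := by
        nlinarith [mul_le_mul ht2 ha2 (sq_nonneg α) (by norm_num : (0:ℝ) ≤ 1)]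
      have hn1 : ‖(1 - ((α^2:ℝ) : 𝕜))‖ = 1 - α ^ 2 := by
        rw [show (1 - ((α^2:ℝ) : 𝕜)) = (((1 - α^2 : ℝ)) : 𝕜) by push_cast; ring,
          RCLike.norm_ofReal, abs_of_pos hβsq]
      rw [hn1, hnc]
      nlinarith [mul_nonneg hβsq.le (sub_nonneg.mpr hprod)]
    obtain ⟨y, hy, hpy, hqy⟩ :=
      one_step hu hv u v (Or.inl ⟨rfl, rfl⟩) ha hx (z * ⟪v, u⟫_𝕜) hcond1
    -- step 2: prescribe inner with u to be z
    have hcond2 : ‖z - ⟪v, y⟫_𝕜 * ⟪u, v⟫_𝕜‖ ^ 2 ≤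
        (1 - ‖⟪u, v⟫_𝕜‖ ^ 2) * (1 - ‖⟪v, y⟫_𝕜‖ ^ 2) := by
      rw [hqy]
      have heq : z - z * ⟪v, u⟫_𝕜 * ⟪u, v⟫_𝕜 = z * (1 - ((α^2:ℝ) : 𝕜)) := by
        rw [mul_assoc, hconja]; ring
      rw [heq, norm_mul]
      have hn1 : ‖(1 - ((α^2:ℝ) : 𝕜))‖ = 1 - α ^ 2 := by
        rw [show (1 - ((α^2:ℝ) : 𝕜)) = (((1 - α^2 : ℝ)) : 𝕜) by push_cast; ring,
          RCLike.norm_ofReal, abs_of_pos hβsq]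
      rw [hn1, hαuv, norm_mul, ← hα]
      have ht2 : ‖z‖^2 ≤ 1 := by nlinarith [norm_nonneg z]
      nlinarith [mul_nonneg hβsq.le (sub_nonneg.mpr ht2)]
    obtain ⟨y₂, hy₂, hpy₂, hqy₂⟩ :=
      one_step hu hv v u (Or.inr ⟨rfl, rfl⟩) ha' hy z hcond2
    exact ⟨y₂, hy₂, hqy₂⟩

theorem stmt_1 {𝕜 : Type} [RCLike 𝕜] (u v w : EuclideanSpace 𝕜 (Fin 3))
    (hu : ‖u‖ = 1) (hv : ‖v‖ = 1) (hw : ‖w‖ = 1)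
    (h1 : ¬ ∃ c : 𝕜, u = c • v) (h2 : ¬ ∃ c : 𝕜, v = c • u) :
    ∃ L : List (EuclideanSpace 𝕜 (Fin 3) ≃ₗᵢ[𝕜] EuclideanSpace 𝕜 (Fin 3)),
      (∀ f ∈ L, f u = u ∨ f v = v) ∧ L.foldr (fun f x => f x) u = w := by
  have hune : u ≠ 0 := by intro h; rw [h] at hu; simp at hu
  have hvne : v ≠ 0 := by intro h; rw [h] at hv; simp at hv
  have hle : ‖⟪v, u⟫_𝕜‖ ≤ 1 := by
    have := norm_inner_le_norm (𝕜 := 𝕜) v u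
    rw [hu, hv] at this; simpa using this
  have ha : ‖⟪v, u⟫_𝕜‖ < 1 := by
    rcases lt_or_eq_of_le hle with h | h
    · exact h
    · exfalso
      apply h1
      obtain ⟨r, _, hr⟩ := (norm_inner_eq_norm_iff hvne hune).mp
        (by rw [h, hv, hu]; ring)
      exact ⟨r, hr⟩
  have hβpos : 0 < Real.sqrt (1 - ‖⟪v, u⟫_𝕜‖ ^ 2) :=
    Real.sqrt_pos.mpr (by nlinarith [norm_nonneg (⟪v, u⟫_𝕜)])
  obtain ⟨n, hn⟩ := exists_pow_lt_of_lt_one hβpos ha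
  have ht : ‖⟪u, w⟫_𝕜‖ ≤ 1 := by
    have := norm_inner_le_norm (𝕜 := 𝕜) u w
    rw [hu, hw] at this; simpa using this
  obtain ⟨x, hx, hux⟩ := growth hu hv ha n (⟪u, w⟫_𝕜) ht (by
    calc ‖⟪u, w⟫_𝕜‖ * ‖⟪v, u⟫_𝕜‖ ^ n ≤ 1 * ‖⟪v, u⟫_𝕜‖ ^ n := by
          apply mul_le_mul_of_nonneg_right ht (by positivity)
      _ ≤ Real.sqrt (1 - ‖⟪v, u⟫_𝕜‖ ^ 2) := by rw [one_mul]; exact hn.le)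
  obtain ⟨L, hL, hf⟩ := reach_of_inner_eq hu hv hx w hw (Or.inl (by rw [hux]))
  exact ⟨L, hL, hf⟩
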